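/- Let g ∈ ℝ[x,y] be a homogeneous polynomial of degree at least 2. Then the following conditions are equivalent: (1) g is squarefree; (2) neither ∂g/∂x nor ∂g/∂y is the zero polynomial, and ∂g/∂x and ∂g/∂y are relatively prime in the ring ℝ[x,y] (their greatest common divisor is a unit). -/

import Mathlib

open MvPolynomial

namespace SqfAux

lemma deg2 (m : Fin 2 →₀ ℕ) : m.degree = m 0 + m 1 := by
  rw [Finsupp.degree, ← Fin.sum_univ_two (f := fun i => m i)]
  exact Finset.sum_subset (Finset.subset_univ _)
    (fun x _ hx => Finsupp.notMem_support_iff.mp hx)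

lemma coeff_pderiv (i : Fin 2) (f : MvPolynomial (Fin 2) ℝ) (m : Fin 2 →₀ ℕ) :
    coeff m (pderiv i f) = ((m i : ℝ) + 1) * coeff (m + Finsupp.single i 1) f := by
  induction f using MvPolynomial.induction_on' with
  | monomial s a =>
    rw [pderiv_monomial, coeff_monomial, coeff_monomial]
    split_ifs with h1 h2 h2
    · subst h2
      have hs : (m + Finsupp.single i 1 : Fin 2 →₀ ℕ) i = m i + 1 := by simp
      rw [hs]; push_cast; ring
    · have hsi : s i = 0 := by
        by_contra hne
        exact h2 (by rw [← h1, tsub_add_cancel_of_le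
          (Finsupp.single_le_iff.mpr (Nat.one_le_iff_ne_zero.mpr hne))])
      rw [hsi]; simp
    · exact absurd (by rw [h2, add_tsub_cancel_right]) h1
    · simp
  | add p q hp hq => simp [hp, hq, mul_add]


lemma coeff_eq_zero_of_pderiv (i : Fin 2) (f : MvPolynomial (Fin 2) ℝ) (h : pderiv i f = 0)
    (m : Fin 2 →₀ ℕ) (hm : m i ≠ 0) : coeff m f = 0 := by
  have hc := coeff_pderiv i f (m - Finsupp.single i 1)
  rw [h, tsub_add_cancel_of_le
    (Finsupp.single_le_iff.mpr (Nat.one_le_iff_ne_zero.mpr hm))] at hc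
  have hne : (((m - Finsupp.single i 1 : Fin 2 →₀ ℕ) i : ℝ) + 1) ≠ 0 := by positivity
  rw [coeff_zero] at hc
  exact (mul_eq_zero.mp hc.symm).resolve_left hne

lemma degreeOf_pderiv_lt (i : Fin 2) (f : MvPolynomial (Fin 2) ℝ) (h : pderiv i f ≠ 0) :
    degreeOf i (pderiv i f) < degreeOf i f := by
  have key : ∀ m ∈ (pderiv i f).support, m i + 1 ≤ degreeOf i f := by
    intro m hm
    rw [MvPolynomial.mem_support_iff, coeff_pderiv] at hm
    have hc : coeff (m + Finsupp.single i 1) f ≠ 0 := fun h0 => hm (by rw [h0, mul_zero])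
    have h2 := MvPolynomial.monomial_le_degreeOf i (MvPolynomial.mem_support_iff.mpr hc)
    simpa using h2
  obtain ⟨m, hm⟩ := Finset.nonempty_iff_ne_empty.mpr
    (fun he => h (MvPolynomial.support_eq_empty.mp he))
  have hpos : 0 < degreeOf i f := lt_of_lt_of_le (Nat.succ_pos _) (key m hm)
  rw [MvPolynomial.degreeOf_lt_iff hpos]
  intro t ht
  exact lt_of_lt_of_le (Nat.lt_succ_self _) (key t ht)

lemma degreeOf_le_of_dvd {p q : MvPolynomial (Fin 2) ℝ} (h : p ∣ q) (hq : q ≠ 0) :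
    degreeOf 0 p ≤ degreeOf 0 q := by
  rw [← MvPolynomial.natDegree_finSuccEquiv, ← MvPolynomial.natDegree_finSuccEquiv]
  exact Polynomial.natDegree_le_of_dvd (map_dvd (MvPolynomial.finSuccEquiv ℝ 1) h)
    (fun h0 => hq ((map_eq_zero_iff _ (AlgEquiv.injective _)).mp h0))

lemma not_dvd_pderiv_zero (q : MvPolynomial (Fin 2) ℝ) (h : pderiv 0 q ≠ 0) :
    ¬ q ∣ pderiv 0 q := fun hdvd =>
  absurd (degreeOf_le_of_dvd hdvd h) (not_le.mpr (degreeOf_pderiv_lt 0 q h))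

lemma not_dvd_pderiv (i : Fin 2) (q : MvPolynomial (Fin 2) ℝ) (h : pderiv i q ≠ 0) :
    ¬ q ∣ pderiv i q := by
  fin_cases i
  · exact not_dvd_pderiv_zero q h
  · intro hdvd
    have hswap : pderiv (0 : Fin 2) (rename (Equiv.swap (0:Fin 2) 1) q)
        = rename (Equiv.swap (0:Fin 2) 1) (pderiv 1 q) := by
      have := pderiv_rename (Equiv.swap (0:Fin 2) 1).injective 1 q
      rwa [Equiv.swap_apply_right] at this
    refine not_dvd_pderiv_zero (rename (Equiv.swap (0:Fin 2) 1) q) ?_ ?_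
    · rw [hswap]
      intro h0
      apply h
      apply MvPolynomial.rename_injective _ (Equiv.swap (0:Fin 2) 1).injective
      simpa using h0
    · rw [hswap]; exact map_dvd _ hdvd


lemma hX (n : Fin 2) : (X n : MvPolynomial (Fin 2) ℝ) = monomial (Finsupp.single n 1) 1 := rfl

lemma euler {g : MvPolynomial (Fin 2) ℝ} {d : ℕ} (hg : g.IsHomogeneous d) :
    X 0 * pderiv 0 g + X 1 * pderiv 1 g = C (d : ℝ) * g := by
  have key : ∀ m ∈ g.support,
      X 0 * pderiv 0 (monomial m (coeff m g)) + X 1 * pderiv 1 (monomial m (coeff m g))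
        = C (d:ℝ) * monomial m (coeff m g) := by
    intro m hm
    have hdeg : m 0 + m 1 = d := by
      by_contra hne
      exact MvPolynomial.mem_support_iff.mp hm (hg.coeff_eq_zero (by rwa [deg2]))
    have e : ∀ j : Fin 2, (X j : MvPolynomial (Fin 2) ℝ) * pderiv j (monomial m (coeff m g))
        = monomial m (coeff m g * (m j : ℝ)) := by
      intro j
      rw [pderiv_monomial, hX, monomial_mul, one_mul]
      by_cases hj : m j = 0
      · rw [hj]; simp
      · rw [add_comm, tsub_add_cancel_of_le
          (Finsupp.single_le_iff.mpr (Nat.one_le_iff_ne_zero.mpr hj))]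
    rw [e 0, e 1, C_mul_monomial, ← map_add]
    congr 1
    rw [← hdeg]
    push_cast
    ring
  calc X 0 * pderiv 0 g + X 1 * pderiv 1 g
      = ∑ m ∈ g.support, (X 0 * pderiv 0 (monomial m (coeff m g))
          + X 1 * pderiv 1 (monomial m (coeff m g))) := by
        conv_lhs => rw [g.as_sum]
        rw [map_sum (pderiv 0), map_sum (pderiv 1), Finset.mul_sum, Finset.mul_sum,
          Finset.sum_add_distrib]
    _ = ∑ m ∈ g.support, C (d:ℝ) * monomial m (coeff m g) := Finset.sum_congr rfl key
    _ = C (d:ℝ) * g := by rw [← Finset.mul_sum, ← g.as_sum]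

lemma not_isUnit_X (n : Fin 2) : ¬ IsUnit (X n : MvPolynomial (Fin 2) ℝ) := by
  intro hu
  have := hu.map (constantCoeff (σ := Fin 2) (R := ℝ))
  rw [constantCoeff_X] at this
  exact not_isUnit_zero this

lemma pure_power0 {g : MvPolynomial (Fin 2) ℝ} {d : ℕ} (hg : g.IsHomogeneous d)
    (hd : 2 ≤ d) (hder : pderiv 0 g = 0) (hsf : Squarefree g) : False := by
  set c := coeff (Finsupp.single (1 : Fin 2) d) g with hc
  have hgm : g = monomial (Finsupp.single (1 : Fin 2) d) c := by
    ext m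
    rw [coeff_monomial]
    split_ifs with hsm
    · rw [← hsm]
    · by_contra hcc
      have h0m : m 0 = 0 := by
        by_contra hnz
        exact hcc (coeff_eq_zero_of_pderiv 0 g hder m hnz)
      have hdm : m.degree = d := by
        by_contra hnz
        exact hcc (hg.coeff_eq_zero hnz)
      rw [deg2, h0m] at hdm
      apply hsm
      ext k
      fin_cases k <;> simp [Finsupp.single_apply, h0m, hdm]
      omega
  have hdvd : (X 1 * X 1 : MvPolynomial (Fin 2) ℝ) ∣ g := by
    refine ⟨monomial (Finsupp.single (1 : Fin 2) (d - 2)) c, ?_⟩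
    rw [hgm, hX 1, monomial_mul, monomial_mul, one_mul, one_mul,
      ← Finsupp.single_add, ← Finsupp.single_add,
      show 1 + 1 + (d - 2) = d from by omega]
  exact not_isUnit_X 1 (hsf _ hdvd)

lemma pure_power1 {g : MvPolynomial (Fin 2) ℝ} {d : ℕ} (hg : g.IsHomogeneous d)
    (hd : 2 ≤ d) (hder : pderiv 1 g = 0) (hsf : Squarefree g) : False := by
  set c := coeff (Finsupp.single (0 : Fin 2) d) g with hc
  have hgm : g = monomial (Finsupp.single (0 : Fin 2) d) c := by
    ext m
    rw [coeff_monomial]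
    split_ifs with hsm
    · rw [← hsm]
    · by_contra hcc
      have h0m : m 1 = 0 := by
        by_contra hnz
        exact hcc (coeff_eq_zero_of_pderiv 1 g hder m hnz)
      have hdm : m.degree = d := by
        by_contra hnz
        exact hcc (hg.coeff_eq_zero hnz)
      rw [deg2, h0m] at hdm
      apply hsm
      ext k
      fin_cases k <;> simp [Finsupp.single_apply, h0m, hdm]
      omega
  have hdvd : (X 0 * X 0 : MvPolynomial (Fin 2) ℝ) ∣ g := by
    refine ⟨monomial (Finsupp.single (0 : Fin 2) (d - 2)) c, ?_⟩
    rw [hgm, hX 0, monomial_mul, monomial_mul, one_mul, one_mul,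
      ← Finsupp.single_add, ← Finsupp.single_add,
      show 1 + 1 + (d - 2) = d from by omega]
  exact not_isUnit_X 0 (hsf _ hdvd)

end SqfAux


/-- Let `g ∈ ℝ[x,y]` be a homogeneous polynomial of degree at least 2.
Then `g` is squarefree if and only if neither partial derivative `∂g/∂x`, `∂g/∂y` is the
zero polynomial and they are relatively prime in `ℝ[x,y]` (every common divisor is a unit). -/
theorem squarefree_iff_pderiv_relPrime
    (g : MvPolynomial (Fin 2) ℝ) (d : ℕ) (hd : 2 ≤ d)
    (hne : g ≠ 0) (hg : g.IsHomogeneous d) :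
    Squarefree g ↔
      (pderiv 0 g ≠ 0 ∧ pderiv 1 g ≠ 0 ∧ IsRelPrime (pderiv 0 g) (pderiv 1 g)) := by
  have hd0 : ((d : ℝ)) ≠ 0 := Nat.cast_ne_zero.mpr (by omega)
  constructor
  · intro hsf
    have hx : pderiv 0 g ≠ 0 := fun h0 => SqfAux.pure_power0 hg hd h0 hsf
    have hy : pderiv 1 g ≠ 0 := fun h0 => SqfAux.pure_power1 hg hd h0 hsf
    refine ⟨hx, hy, ?_⟩
    intro q hq0 hq1
    by_contra hqu
    have hqz : q ≠ 0 := fun h => hx (zero_dvd_iff.mp (h ▸ hq0))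
    obtain ⟨p, hpirr, hpq⟩ := WfDvdMonoid.exists_irreducible_factor hqu hqz
    have hp : Prime p := UniqueFactorizationMonoid.irreducible_iff_prime.mp hpirr
    have hpx : p ∣ pderiv 0 g := hpq.trans hq0
    have hpy : p ∣ pderiv 1 g := hpq.trans hq1
    have hpg : p ∣ g := by
      have h1 : p ∣ C (d : ℝ) * g := by
        rw [← SqfAux.euler hg]
        exact dvd_add (hpx.mul_left _) (hpy.mul_left _)
      have h2 : C ((d : ℝ)⁻¹) * (C (d : ℝ) * g) = g := by
        rw [← mul_assoc, ← C_mul, inv_mul_cancel₀ hd0, C_1, one_mul]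
      exact h2 ▸ h1.mul_left _
    obtain ⟨h, hgh⟩ := hpg
    have hph : ¬ p ∣ h := by
      intro hdvd
      obtain ⟨k, hk⟩ := hdvd
      exact hp.not_unit (hsf p ⟨k, by rw [hgh, hk]; ring⟩)
    have hp0 : pderiv 0 p = 0 := by
      by_contra hne0
      have hdd : p ∣ pderiv 0 p * h := by
        have h3 := hpx
        rw [hgh, pderiv_mul] at h3
        exact (dvd_add_left (dvd_mul_right p _)).mp h3
      rcases hp.2.2 _ _ hdd with h4 | h4
      · exact SqfAux.not_dvd_pderiv 0 p hne0 h4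
      · exact hph h4
    have hp1 : pderiv 1 p = 0 := by
      by_contra hne0
      have hdd : p ∣ pderiv 1 p * h := by
        have h3 := hpy
        rw [hgh, pderiv_mul] at h3
        exact (dvd_add_left (dvd_mul_right p _)).mp h3
      rcases hp.2.2 _ _ hdd with h4 | h4
      · exact SqfAux.not_dvd_pderiv 1 p hne0 h4
      · exact hph h4
    have hpc : p = C (coeff 0 p) := by
      ext m
      rw [coeff_C]
      split_ifs with hm0
      · rw [← hm0]
      · have hm : m ≠ 0 := fun h => hm0 (h ▸ rfl)
        obtain ⟨i, hi⟩ := Finsupp.support_nonempty_iff.mpr hm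
        have hmi : m i ≠ 0 := Finsupp.mem_support_iff.mp hi
        fin_cases i
        · exact SqfAux.coeff_eq_zero_of_pderiv 0 p hp0 m hmi
        · exact SqfAux.coeff_eq_zero_of_pderiv 1 p hp1 m hmi
    apply hp.not_unit
    rw [hpc]
    refine (isUnit_iff_ne_zero.mpr fun hc0 => hp.ne_zero ?_).map C
    rw [hpc, hc0, map_zero]
  · rintro ⟨h0, h1, hrp⟩
    intro q hq
    obtain ⟨h, hgh⟩ := hq
    refine hrp ?_ ?_
    · exact ⟨pderiv 0 q * h + pderiv 0 q * h + q * pderiv 0 h,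
        by rw [hgh, pderiv_mul, pderiv_mul]; ring⟩
    · exact ⟨pderiv 1 q * h + pderiv 1 q * h + q * pderiv 1 h,
        by rw [hgh, pderiv_mul, pderiv_mul]; ring⟩
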